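/- Let G be a graph, C a longest cycle of G with a fixed orientation, x a vertex off C with N_G(x) ⊆ V(C), and let x_i, x_j be distinct neighbors of x on C. Suppose uv is an edge of the arc of C from x_j⁺ to x_i (following the orientation) with v = u⁺. If u x_i⁺ ∈ E(G), then v x_j⁺ ∉ E(G). -/

import Mathlib

open SimpleGraph

variable {V : Type*}

/-- The number of connected components after deleting the vertex set `S`. -/
noncomputable def omegaDel [Fintype V] (G : SimpleGraph V) (S : Finset V) : ℕ :=
  Nat.card ((G.induce ((S : Set V)ᶜ)).ConnectedComponent)

/-- `G` is `m`-connected. -/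
def IsKConn [Fintype V] (G : SimpleGraph V) (m : ℕ) : Prop :=
  m < Fintype.card V ∧ ∀ S : Finset V, S.card < m → (G.induce ((S : Set V)ᶜ)).Connected

/-- The independence number of `G`. -/
noncomputable def alphaNum [Fintype V] (G : SimpleGraph V) : ℕ :=
  sSup {n | ∃ s : Finset V, (∀ a ∈ s, ∀ b ∈ s, ¬ G.Adj a b) ∧ s.card = n}

/-- The minimum degree of `G`. -/
noncomputable def minDeg [Fintype V] (G : SimpleGraph V) : ℕ :=
  sInf {d | ∃ v : V, (G.neighborSet v).ncard = d}

/-- The graph `K₂ ∪ kK₁`. -/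
def K2kK1 (k : ℕ) : SimpleGraph (Fin 2 ⊕ Fin k) :=
  SimpleGraph.fromRel fun a b => a.isLeft ∧ b.isLeft

/-- `G` contains no induced copy of `H`. -/
def IndFree {W : Type*} (H : SimpleGraph W) (G : SimpleGraph V) : Prop :=
  IsEmpty (H ↪g G)

/-- `G` has a hamiltonian cycle. -/
def Ham [DecidableEq V] (G : SimpleGraph V) : Prop :=
  ∃ (a : V) (p : G.Walk a a), p.IsHamiltonianCycle

/-- `G` is hamiltonian-connected. -/
def HamConn [DecidableEq V] (G : SimpleGraph V) : Prop :=
  ∀ a b : V, a ≠ b → ∃ p : G.Walk a b, p.IsHamiltonian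

/-- The Petersen graph. -/
def petersen : SimpleGraph (ZMod 5 ⊕ ZMod 5) :=
  SimpleGraph.fromRel fun a b =>
    match a, b with
    | Sum.inl i, Sum.inl j => i = j + 1
    | Sum.inr i, Sum.inr j => i = j + 2
    | Sum.inl i, Sum.inr j => i = j
    | _, _ => False

private lemma exists_cycle_of_fn {V : Type*} (G : SimpleGraph V) (m : ℕ) (hm : 3 ≤ m)
    (g : ℕ → V) (hginj : ∀ k l, k < m → l < m → g k = g l → k = l) (hgm : g m = g 0)
    (hadj : ∀ k, k < m → G.Adj (g k) (g (k + 1))) :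
    ∃ (v : V) (c : G.Walk v v), c.IsCycle ∧ c.length = m := by
  have hg' : ∀ k l, k ≤ m → l ≤ m → g k = g l →
      k = l ∨ (k = 0 ∧ l = m) ∨ (k = m ∧ l = 0) := by
    intro k l hk hl he
    rcases eq_or_lt_of_le hk with hk | hk <;> rcases eq_or_lt_of_le hl with hl | hl
    · omega
    · subst hk
      have := hginj 0 l (by omega) hl (by rw [← hgm, he])
      omega
    · subst hl
      have := hginj k 0 hk (by omega) (by rw [he, hgm])
      omega
    · exact Or.inl (hginj k l hk hl he)
  have build : ∀ k, k ≤ m → ∃ p : G.Walk (g 0) (g k),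
      p.support = (List.range (k + 1)).map g ∧
      p.edges = (List.range k).map (fun t => s(g t, g (t + 1))) ∧ p.length = k := by
    intro k
    induction k with
    | zero => exact fun _ => ⟨SimpleGraph.Walk.nil, by rw [List.range_succ]; simp, by simp, rfl⟩
    | succ k ih =>
      intro hk
      obtain ⟨p, hs, he, hl⟩ := ih (by omega)
      refine ⟨p.concat (hadj k (by omega)), ?_, ?_, ?_⟩
      · rw [SimpleGraph.Walk.support_concat, hs, List.range_succ (n := k + 1)]
        simp
      · rw [SimpleGraph.Walk.edges_concat, he, List.range_succ (n := k)]
        simp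
      · rw [SimpleGraph.Walk.length_concat, hl]
  obtain ⟨p, hs, he, hl⟩ := build m le_rfl
  refine ⟨g 0, p.copy rfl hgm, ?_, ?_⟩
  · rw [SimpleGraph.Walk.isCycle_def]
    refine ⟨?_, ?_, ?_⟩
    · rw [SimpleGraph.Walk.isTrail_def, SimpleGraph.Walk.edges_copy, he]
      refine List.Nodup.map_on ?_ List.nodup_range
      intro t1 h1 t2 h2 hse
      rw [List.mem_range] at h1 h2
      rw [Sym2.eq_iff] at hse
      rcases hse with ⟨e1, e2⟩ | ⟨e1, e2⟩
      · exact hginj t1 t2 h1 h2 e1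
      · have c1 := hg' t1 (t2 + 1) (by omega) (by omega) e1
        have c2 := hg' (t1 + 1) t2 (by omega) (by omega) e2
        omega
    · intro hnil
      have h0 := congrArg SimpleGraph.Walk.length hnil
      rw [SimpleGraph.Walk.length_copy, hl] at h0
      simp at h0
      omega
    · rw [SimpleGraph.Walk.support_copy, hs, List.range_succ_eq_map, List.map_cons,
        List.tail_cons, List.map_map]
      refine List.Nodup.map_on ?_ List.nodup_range
      intro t1 h1 t2 h2 hse
      rw [List.mem_range] at h1 h2
      have := hg' (t1 + 1) (t2 + 1) (by omega) (by omega) hse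
      omega
  · rw [SimpleGraph.Walk.length_copy, hl]

/-- On a longest cycle `C` with `x` off `C`, for distinct neighbors `xᵢ = f i` and
`xⱼ = f j` of `x`, if `uv` is an edge of the arc from `xⱼ⁺` to `xᵢ` (with `v = u⁺`) and
`u xᵢ⁺ ∈ E(G)`, then `v xⱼ⁺ ∉ E(G)`. -/
theorem stmt_19 {V : Type*} [Fintype V] (G : SimpleGraph V) (n : ℕ) (hn : 3 ≤ n)
    (f : ZMod n → V) (hinj : Function.Injective f)
    (hadj : ∀ i : ZMod n, G.Adj (f i) (f (i + 1)))
    (hlong : ∀ (v : V) (c : G.Walk v v), c.IsCycle → c.length ≤ n)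
    (x : V) (hx : x ∉ Set.range f) (hNx : G.neighborSet x ⊆ Set.range f)
    (i j : ZMod n) (hij : i ≠ j) (hxi : G.Adj x (f i)) (hxj : G.Adj x (f j))
    (s : ℕ) (hs : s < (i - j - 1 : ZMod n).val)
    (hu : G.Adj (f (j + 1 + (s : ZMod n))) (f (i + 1))) :
    ¬ G.Adj (f (j + 1 + (s : ZMod n) + 1)) (f (j + 1)) := by
  intro hv
  haveI : NeZero n := ⟨by omega⟩
  have hji : j - i ≠ (0 : ZMod n) := sub_ne_zero.mpr (Ne.symm hij)
  set d1 := (j - i).val with hd1def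
  have hd1pos : 0 < d1 := ZMod.val_pos.mpr hji
  have hd1lt : d1 < n := ZMod.val_lt _
  have hcast_d1 : ((d1 : ℕ) : ZMod n) = j - i := ZMod.natCast_rightInverse _
  have h1 : ((n - d1 - 1 : ℕ) : ZMod n) = i - j - 1 := by
    rw [Nat.cast_sub (by omega), Nat.cast_sub (by omega), ZMod.natCast_self, hcast_d1]
    ring
  have ht_eq : (i - j - 1 : ZMod n).val = n - d1 - 1 := by
    rw [← h1, ZMod.val_cast_of_lt (by omega)]
  have hsn : d1 + s + 2 ≤ n := by omega
  set w : ℕ → ℕ := fun k =>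
    if k ≤ d1 then n - k else if k ≤ d1 + s + 1 then d1 + s + 1 - k else k - d1 - 1 with hw
  set g : ℕ → V := fun k =>
    if k = 0 ∨ k = n + 1 then x else f ((j : ZMod n) + 1 + ((w k : ℕ) : ZMod n)) with hg
  have hg0 : g 0 = x := by simp [hg]
  have hgm : g (n + 1) = g 0 := by simp [hg]
  have hgval : ∀ k, 1 ≤ k → k ≤ n → g k = f ((j : ZMod n) + 1 + ((w k : ℕ) : ZMod n)) := by
    intro k h1k h2k
    simp only [hg]
    rw [if_neg (by omega)]
  have hwlt : ∀ k, 1 ≤ k → k ≤ n → w k < n := by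
    intro k h1k h2k
    simp only [hw]
    split_ifs <;> omega
  -- injectivity
  have hginj : ∀ k l, k < n + 1 → l < n + 1 → g k = g l → k = l := by
    intro k l hk hl he
    by_cases hk0 : k = 0 <;> by_cases hl0 : l = 0
    · omega
    · exfalso
      subst hk0
      rw [hg0, hgval l (by omega) (by omega)] at he
      exact hx ⟨_, he.symm⟩
    · exfalso
      subst hl0
      rw [hg0, hgval k (by omega) (by omega)] at he
      exact hx ⟨_, he⟩
    · rw [hgval k (by omega) (by omega), hgval l (by omega) (by omega)] at he
      have h2 := add_left_cancel (hinj he)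
      have h3 : w k = w l := by
        have h4 := congrArg ZMod.val h2
        rwa [ZMod.val_cast_of_lt (hwlt k (by omega) (by omega)),
          ZMod.val_cast_of_lt (hwlt l (by omega) (by omega))] at h4
      simp only [hw] at h3
      split_ifs at h3 <;> omega
  -- adjacency
  have hadjg : ∀ k, k < n + 1 → G.Adj (g k) (g (k + 1)) := by
    intro k hk
    by_cases hk0 : k = 0
    · subst hk0
      have e2 : g 1 = f j := by
        rw [hgval 1 le_rfl (by omega)]
        have hw1 : w 1 = n - 1 := by simp only [hw]; rw [if_pos (by omega)]
        rw [hw1, Nat.cast_sub (by omega), ZMod.natCast_self]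
        congr 1
        push_cast
        ring
      rw [hg0, e2]
      exact hxj
    by_cases hkn : k = n
    · have e1 : g k = f i := by
        rw [hkn, hgval n (by omega) le_rfl]
        have hwn : w n = n - d1 - 1 := by
          simp only [hw]; rw [if_neg (by omega), if_neg (by omega)]
        rw [hwn, h1]
        congr 1
        ring
      have e0 : g (k + 1) = x := by rw [hkn, hgm, hg0]
      rw [e1, e0]
      exact hxi.symm
    -- 1 ≤ k ≤ n - 1
    rw [hgval k (by omega) (by omega), hgval (k + 1) (by omega) (by omega)]
    by_cases hA : k + 1 ≤ d1
    · -- interior of reversed arc D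
      have ek : w k = n - k := by simp only [hw]; rw [if_pos (by omega)]
      have ek1 : w (k + 1) = n - (k + 1) := by simp only [hw]; rw [if_pos (by omega)]
      rw [ek, ek1]
      have hc : ((n - k : ℕ) : ZMod n) = ((n - (k + 1) : ℕ) : ZMod n) + 1 := by
        have e : n - k = (n - (k + 1)) + 1 := by omega
        rw [e]; push_cast; ring
      rw [hc, ← add_assoc]
      exact (hadj _).symm
    by_cases hB : k ≤ d1
    · -- k = d1 : edge f(i+1) -- u
      have hkd : k = d1 := by omega
      have ek : w k = n - d1 := by simp only [hw]; rw [if_pos (by omega)]; omega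
      have ek1 : w (k + 1) = s := by
        simp only [hw]; rw [if_neg (by omega), if_pos (by omega)]; omega
      rw [ek, ek1]
      have hc : ((n - d1 : ℕ) : ZMod n) = i - j := by
        rw [Nat.cast_sub (by omega), ZMod.natCast_self, hcast_d1]; ring
      rw [hc]
      have e : (j : ZMod n) + 1 + (i - j) = i + 1 := by ring
      rw [e]
      exact hu.symm
    by_cases hC : k + 1 ≤ d1 + s + 1
    · -- interior of reversed arc A
      have ek : w k = d1 + s + 1 - k := by
        simp only [hw]; rw [if_neg (by omega), if_pos (by omega)]
      have ek1 : w (k + 1) = d1 + s + 1 - (k + 1) := by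
        simp only [hw]; rw [if_neg (by omega), if_pos (by omega)]
      rw [ek, ek1]
      have hc : ((d1 + s + 1 - k : ℕ) : ZMod n) = ((d1 + s + 1 - (k + 1) : ℕ) : ZMod n) + 1 := by
        have e : d1 + s + 1 - k = (d1 + s + 1 - (k + 1)) + 1 := by omega
        rw [e]; push_cast; ring
      rw [hc, ← add_assoc]
      exact (hadj _).symm
    by_cases hD : k ≤ d1 + s + 1
    · -- k = d1 + s + 1 : edge f(j+1) -- v
      have ek : w k = 0 := by
        simp only [hw]; rw [if_neg (by omega), if_pos (by omega)]; omega
      have ek1 : w (k + 1) = s + 1 := by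
        simp only [hw]; rw [if_neg (by omega), if_neg (by omega)]; omega
      rw [ek, ek1]
      have e1 : (j : ZMod n) + 1 + ((0 : ℕ) : ZMod n) = j + 1 := by push_cast; ring
      have e2 : (j : ZMod n) + 1 + ((s + 1 : ℕ) : ZMod n) = j + 1 + (s : ZMod n) + 1 := by
        push_cast; ring
      rw [e1, e2]
      exact hv.symm
    · -- interior of arc B
      have ek : w k = k - d1 - 1 := by
        simp only [hw]; rw [if_neg (by omega), if_neg (by omega)]
      have ek1 : w (k + 1) = (k - d1 - 1) + 1 := by
        simp only [hw]; rw [if_neg (by omega), if_neg (by omega)]; omega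
      rw [ek, ek1]
      push_cast
      rw [← add_assoc]
      exact hadj _
  obtain ⟨v, c, hc, hlen⟩ := exists_cycle_of_fn G (n + 1) (by omega) g hginj hgm hadjg
  have := hlong v c hc
  omega
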